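/- arXiv:2211.02692 — 2 statements merged into one kernel-verified Lean document; each statement's English description precedes it below -/
import Mathlib

section
/- Let h > 0 and let b_i (i ∈ ℤ) be the degree-1 B-spline (hat function) on the uniform grid {kh : k ∈ ℤ}. Then for all integers i, j one has ∫_ℝ b_j'(t) b_i(t) dt + (h/2) ∫_ℝ b_j'(t) b_i'(t) dt = 1 if j = i, = −1 if j = i − 1, and = 0 in all other cases (in particular the value is 0 whenever j > i). Consequently, for piecewise-linear splines (p_t = 1) on a uniform mesh, the SUPG discretization of the advection problem u' = f with stabilization parameter τ_SUPG = h/2 has a lower triangular (indeed lower bidiagonal) system matrix. -/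
open MeasureTheory

/-- Degree-1 B-spline (hat function) centered at `i*h` on the uniform grid `{k*h : k ∈ ℤ}`. -/
noncomputable def hat (h : ℝ) (i : ℤ) (t : ℝ) : ℝ := max 0 (1 - |t / h - (i : ℝ)|)

/-- Almost-everywhere (piecewise) derivative of the hat function `hat h i`. -/
noncomputable def hatDeriv (h : ℝ) (i : ℤ) (t : ℝ) : ℝ :=
  if ((i : ℝ) - 1) * h < t ∧ t < (i : ℝ) * h then 1 / h
  else if (i : ℝ) * h < t ∧ t < ((i : ℝ) + 1) * h then -(1 / h)
  else 0

/-- Indicator step function of the interval `(a, a+h)`. -/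
noncomputable def stepf (h a : ℝ) (t : ℝ) : ℝ := Set.indicator (Set.Ioo a (a + h)) (fun _ => 1) t

lemma stepf_apply (h a t : ℝ) : stepf h a t = if a < t ∧ t < a + h then 1 else 0 := by
  simp [stepf, Set.indicator_apply, Set.mem_Ioo]

lemma hatDeriv_eq (h : ℝ) (i : ℤ) (t : ℝ) :
    hatDeriv h i t = (1 / h) * stepf h (((i : ℝ) - 1) * h) t - (1 / h) * stepf h ((i : ℝ) * h) t := by
  rw [stepf_apply, stepf_apply]
  have e1 : ((i : ℝ) - 1) * h + h = (i : ℝ) * h := by ring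
  have e2 : (i : ℝ) * h + h = ((i : ℝ) + 1) * h := by ring
  rw [e1, e2]
  unfold hatDeriv
  split_ifs with h1 h2 <;> try ring
  exact absurd h2.1 (not_lt.2 h1.2.le)

lemma continuous_hat (h : ℝ) (i : ℤ) : Continuous (hat h i) := by
  unfold hat; fun_prop

lemma stepf_mul (h a : ℝ) (g : ℝ → ℝ) (t : ℝ) :
    stepf h a t * g t = Set.indicator (Set.Ioo a (a + h)) g t := by
  by_cases ht : t ∈ Set.Ioo a (a + h) <;>
    simp [stepf, Set.indicator_of_mem, Set.indicator_of_notMem, ht]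

lemma integrable_stepf_mul (h a : ℝ) {g : ℝ → ℝ} (hg : Continuous g) :
    Integrable (fun t => stepf h a t * g t) := by
  have e : (fun t => stepf h a t * g t) = Set.indicator (Set.Ioo a (a + h)) g :=
    funext (stepf_mul h a g)
  rw [e]
  exact ((hg.continuousOn.integrableOn_Icc).mono_set Set.Ioo_subset_Icc_self).integrable_indicator
    measurableSet_Ioo

lemma integrable_stepf (h a : ℝ) : Integrable (stepf h a) :=
  (integrableOn_const measure_Ioo_lt_top.ne).integrable_indicator measurableSet_Ioo

lemma integrable_stepf_mul_stepf (h a b : ℝ) :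
    Integrable (fun t => stepf h a t * stepf h b t) := by
  have e : (fun t => stepf h a t * stepf h b t) = Set.indicator (Set.Ioo a (a + h)) (stepf h b) :=
    funext (stepf_mul h a (stepf h b))
  rw [e]
  exact ((integrable_stepf h b).integrableOn).integrable_indicator measurableSet_Ioo

lemma integral_stepf (h a : ℝ) (hh : 0 < h) : ∫ t, stepf h a t = h := by
  unfold stepf
  rw [integral_indicator measurableSet_Ioo, setIntegral_const, measureReal_def, Real.volume_Ioo, smul_eq_mul,
    mul_one, show a + h - a = h by ring, ENNReal.toReal_ofReal hh.le]

lemma integral_linear (a b c h : ℝ) :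
    ∫ t in a..b, (t / h - c) = (b^2 - a^2) / (2*h) - c*(b-a) := by
  rw [intervalIntegral.integral_sub (intervalIntegral.intervalIntegrable_id.div_const h)
      intervalIntegrable_const,
    intervalIntegral.integral_div, integral_id, intervalIntegral.integral_const]
  simp [smul_eq_mul]; ring

lemma integral_linear' (a b c h : ℝ) :
    ∫ t in a..b, (c - t / h) = c*(b-a) - (b^2 - a^2) / (2*h) := by
  rw [intervalIntegral.integral_sub intervalIntegrable_const
      (intervalIntegral.intervalIntegrable_id.div_const h),
    intervalIntegral.integral_div, integral_id, intervalIntegral.integral_const]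
  simp [smul_eq_mul]; ring

/-- Integral of a step times a step. -/
lemma stepstep (h : ℝ) (hh : 0 < h) (k l : ℤ) :
    ∫ t, stepf h ((k : ℝ) * h) t * stepf h ((l : ℝ) * h) t = if k = l then h else 0 := by
  rcases eq_or_ne k l with rfl | hkl
  · rw [if_pos rfl]
    have e : ∀ t, stepf h ((k : ℝ) * h) t * stepf h ((k : ℝ) * h) t = stepf h ((k : ℝ) * h) t := by
      intro t; rw [stepf_apply]; split_ifs <;> norm_num
    simp only [e]
    exact integral_stepf h _ hh
  · rw [if_neg hkl]
    have e : ∀ t, stepf h ((k : ℝ) * h) t * stepf h ((l : ℝ) * h) t = 0 := by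
      intro t; rw [stepf_apply, stepf_apply]
      split_ifs with h1 h2 <;> try norm_num
      exfalso
      rcases hkl.lt_or_gt with H | H
      · have hc : ((k : ℝ) + 1) ≤ (l : ℝ) := by exact_mod_cast H
        nlinarith [h1.2, h2.1, mul_le_mul_of_nonneg_right hc hh.le]
      · have hc : ((l : ℝ) + 1) ≤ (k : ℝ) := by exact_mod_cast H
        nlinarith [h1.1, h2.2, mul_le_mul_of_nonneg_right hc hh.le]
    simp only [e, integral_zero]

/-- Integral of a step times a hat. -/
lemma stephat (h : ℝ) (hh : 0 < h) (k i : ℤ) :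
    ∫ t, stepf h ((k : ℝ) * h) t * hat h i t = if k = i - 1 ∨ k = i then h / 2 else 0 := by
  have h0 : h ≠ 0 := ne_of_gt hh
  simp only [stepf_mul h _ (hat h i)]
  rw [integral_indicator measurableSet_Ioo, ← integral_Ioc_eq_integral_Ioo,
    ← intervalIntegral.integral_of_le (by linarith : (k : ℝ) * h ≤ (k : ℝ) * h + h)]
  by_cases hk1 : k = i - 1
  · subst hk1
    rw [if_pos (Or.inl rfl)]
    have hcast : (((i - 1 : ℤ) : ℝ)) = (i : ℝ) - 1 := by push_cast; ring
    rw [hcast]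
    rw [intervalIntegral.integral_congr (g := fun t => t / h - ((i : ℝ) - 1)) ?_]
    · rw [integral_linear]; field_simp; ring
    · intro t ht
      rw [Set.uIcc_of_le (by linarith)] at ht
      obtain ⟨ht1, ht2⟩ := ht
      have hb1 : (i : ℝ) - 1 ≤ t / h := (le_div_iff₀ hh).2 (by linarith)
      have hb2 : t / h ≤ (i : ℝ) := (div_le_iff₀ hh).2 (by linarith)
      show hat h i t = t / h - ((i : ℝ) - 1)
      unfold hat
      rw [abs_of_nonpos (by linarith), max_eq_right (by linarith)]
      ring
  · by_cases hk2 : k = i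
    · subst hk2
      rw [if_pos (Or.inr rfl)]
      rw [intervalIntegral.integral_congr (g := fun t => ((k : ℝ) + 1) - t / h) ?_]
      · rw [integral_linear']; field_simp; ring
      · intro t ht
        rw [Set.uIcc_of_le (by linarith)] at ht
        obtain ⟨ht1, ht2⟩ := ht
        have hb1 : (k : ℝ) ≤ t / h := (le_div_iff₀ hh).2 (by linarith)
        have hb2 : t / h ≤ (k : ℝ) + 1 := (div_le_iff₀ hh).2 (by linarith)
        show hat h k t = ((k : ℝ) + 1) - t / h
        unfold hat
        rw [abs_of_nonneg (by linarith), max_eq_right (by linarith)]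
        ring
    · rw [if_neg (by tauto)]
      rw [intervalIntegral.integral_congr (g := fun _ => (0 : ℝ)) ?_]
      · simp
      · intro t ht
        rw [Set.uIcc_of_le (by linarith)] at ht
        obtain ⟨ht1, ht2⟩ := ht
        have hb1 : (k : ℝ) ≤ t / h := (le_div_iff₀ hh).2 (by linarith)
        have hb2 : t / h ≤ (k : ℝ) + 1 := (div_le_iff₀ hh).2 (by linarith)
        have habs : (1 : ℝ) ≤ |t / h - (i : ℝ)| := by
          rcases lt_or_gt_of_ne (show k ≠ i from hk2) with H | H
          · have hc : (k : ℝ) + 1 ≤ (i : ℝ) - 1 := by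
              exact_mod_cast (by omega : (k : ℤ) + 1 ≤ i - 1)
            calc (1 : ℝ) ≤ (i : ℝ) - t / h := by linarith
            _ = -(t / h - (i : ℝ)) := by ring
            _ ≤ |t / h - (i : ℝ)| := neg_le_abs _
          · have hc : (i : ℝ) + 1 ≤ (k : ℝ) := by exact_mod_cast H
            calc (1 : ℝ) ≤ t / h - (i : ℝ) := by linarith
            _ ≤ |t / h - (i : ℝ)| := le_abs_self _
        show hat h i t = 0
        unfold hat
        rw [max_eq_left (by linarith)]

/-- For piecewise-linear splines on a uniform mesh, the SUPG bilinear form with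
`τ_SUPG = h/2` applied to hat functions gives a lower bidiagonal matrix:
the `(i,j)` entry is `1` if `j = i`, `-1` if `j = i - 1`, and `0` otherwise. -/
theorem supg_hat_lower_triangular (h : ℝ) (hh : 0 < h) (i j : ℤ) :
    (∫ t : ℝ, hatDeriv h j t * hat h i t) +
      (h / 2) * (∫ t : ℝ, hatDeriv h j t * hatDeriv h i t) =
    if j = i then 1 else if j = i - 1 then -1 else 0 := by
  have h0 : h ≠ 0 := ne_of_gt hh
  have hcast : ∀ m : ℤ, ((m : ℝ) - 1) * h = (((m - 1 : ℤ)) : ℝ) * h := by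
    intro m; push_cast; ring
  have int1 : (∫ t : ℝ, hatDeriv h j t * hat h i t) =
      (1 / h) * (if j - 1 = i - 1 ∨ j - 1 = i then h / 2 else 0) -
      (1 / h) * (if j = i - 1 ∨ j = i then h / 2 else 0) := by
    have e : (fun t => hatDeriv h j t * hat h i t) = fun t =>
        (1 / h) * (stepf h (((j : ℝ) - 1) * h) t * hat h i t) -
        (1 / h) * (stepf h ((j : ℝ) * h) t * hat h i t) :=
      funext fun t => by rw [hatDeriv_eq]; ring
    rw [e, integral_sub (((integrable_stepf_mul h _ (continuous_hat h i))).const_mul _)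
        (((integrable_stepf_mul h _ (continuous_hat h i))).const_mul _),
      integral_const_mul, integral_const_mul, hcast j, stephat h hh (j - 1) i, stephat h hh j i]
  have int2 : (∫ t : ℝ, hatDeriv h j t * hatDeriv h i t) =
      (1 / h * (1 / h)) * (if j - 1 = i - 1 then h else 0) -
      (1 / h * (1 / h)) * (if j - 1 = i then h else 0) -
      (1 / h * (1 / h)) * (if j = i - 1 then h else 0) +
      (1 / h * (1 / h)) * (if j = i then h else 0) := by
    have e : (fun t => hatDeriv h j t * hatDeriv h i t) = fun t =>
        (1 / h * (1 / h)) * (stepf h (((j : ℝ) - 1) * h) t * stepf h (((i : ℝ) - 1) * h) t) -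
        (1 / h * (1 / h)) * (stepf h (((j : ℝ) - 1) * h) t * stepf h ((i : ℝ) * h) t) -
        (1 / h * (1 / h)) * (stepf h ((j : ℝ) * h) t * stepf h (((i : ℝ) - 1) * h) t) +
        (1 / h * (1 / h)) * (stepf h ((j : ℝ) * h) t * stepf h ((i : ℝ) * h) t) :=
      funext fun t => by rw [hatDeriv_eq, hatDeriv_eq]; ring
    have i1 : Integrable (fun t : ℝ =>
        (1 / h * (1 / h)) * (stepf h (((j : ℝ) - 1) * h) t * stepf h (((i : ℝ) - 1) * h) t)) :=
      (integrable_stepf_mul_stepf h _ _).const_mul _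
    have i2 : Integrable (fun t : ℝ =>
        (1 / h * (1 / h)) * (stepf h (((j : ℝ) - 1) * h) t * stepf h ((i : ℝ) * h) t)) :=
      (integrable_stepf_mul_stepf h _ _).const_mul _
    have i3 : Integrable (fun t : ℝ =>
        (1 / h * (1 / h)) * (stepf h ((j : ℝ) * h) t * stepf h (((i : ℝ) - 1) * h) t)) :=
      (integrable_stepf_mul_stepf h _ _).const_mul _
    have i4 : Integrable (fun t : ℝ =>
        (1 / h * (1 / h)) * (stepf h ((j : ℝ) * h) t * stepf h ((i : ℝ) * h) t)) :=
      (integrable_stepf_mul_stepf h _ _).const_mul _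
    have i12 : Integrable (fun t : ℝ =>
        (1 / h * (1 / h)) * (stepf h (((j : ℝ) - 1) * h) t * stepf h (((i : ℝ) - 1) * h) t) -
        (1 / h * (1 / h)) * (stepf h (((j : ℝ) - 1) * h) t * stepf h ((i : ℝ) * h) t)) := by
      exact i1.sub i2
    have i123 : Integrable (fun t : ℝ =>
        (1 / h * (1 / h)) * (stepf h (((j : ℝ) - 1) * h) t * stepf h (((i : ℝ) - 1) * h) t) -
        (1 / h * (1 / h)) * (stepf h (((j : ℝ) - 1) * h) t * stepf h ((i : ℝ) * h) t) -
        (1 / h * (1 / h)) * (stepf h ((j : ℝ) * h) t * stepf h (((i : ℝ) - 1) * h) t)) := by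
      exact i12.sub i3
    rw [e, integral_add i123 i4, integral_sub i12 i3, integral_sub i1 i2,
      integral_const_mul, integral_const_mul, integral_const_mul, integral_const_mul,
      hcast j, hcast i, stepstep h hh (j - 1) (i - 1), stepstep h hh (j - 1) i,
      stepstep h hh j (i - 1), stepstep h hh j i]
  rw [int1, int2]
  split_ifs <;> first
    | (exfalso; omega)
    | (field_simp; try ring)
    | ring
    | norm_num
end

section
/- Let h > 0, let n ≥ 2 be an integer and T = n h. Let b_{n−1}(t) = max(0, 1 − |t/h − (n−1)|) be the interior hat function centered at (n−1)h, and let b_n be the right-boundary degree-1 B-spline on [0,T], i.e. b_n(t) = (t − (n−1)h)/h for t ∈ [(n−1)h, T] and b_n(t) = 0 otherwise. Then, with derivatives taken in the a.e. (piecewise) sense, ∫_0^T b_n'(t) b_{n−1}(t) dt + (h/2) ∫_0^T b_n'(t) b_{n−1}'(t) dt = 0, ∫_0^T b_n'(t) b_n(t) dt + (h/2) ∫_0^T (b_n'(t))^2 dt = 1, and ∫_0^T b_{n−1}'(t) b_n(t) dt + (h/2) ∫_0^T b_{n−1}'(t) b_n'(t) dt = −1. Hence the SUPG triangularity with τ_SUPG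 = h/2 for degree-1 splines also holds in the last row and column, where the basis contains the truncated boundary B-spline. -/
open MeasureTheory

/-- Right-boundary degree-1 B-spline on `[0, n*h]`:
`b_n(t) = (t - (n-1)h)/h` on `[(n-1)h, nh]` and `0` otherwise. -/
noncomputable def hatR (h : ℝ) (n : ℕ) (t : ℝ) : ℝ :=
  if ((n : ℝ) - 1) * h ≤ t ∧ t ≤ (n : ℝ) * h then (t - ((n : ℝ) - 1) * h) / h else 0

/-- Almost-everywhere (piecewise) derivative of the right-boundary B-spline `hatR h n`. -/
noncomputable def hatRDeriv (h : ℝ) (n : ℕ) (t : ℝ) : ℝ :=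
  if ((n : ℝ) - 1) * h < t ∧ t < (n : ℝ) * h then 1 / h else 0


lemma integral_of_piecewise (f : ℝ → ℝ) (A B a b : ℝ) (ha : 0 ≤ a) (hab : a ≤ b)
    (h0 : ∀ t ∈ Set.Icc (0:ℝ) a, f t = 0)
    (h1 : ∀ t ∈ Set.Ioo a b, f t = A + B * t) :
    ∫ t in (0:ℝ)..b, f t = A * (b - a) + B * (b ^ 2 - a ^ 2) / 2 := by
  have hbne : ∀ᵐ t : ℝ, t ≠ b := by
    rw [ae_iff]
    simp only [not_not, Set.setOf_eq_eq_singleton]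
    exact measure_singleton b
  have heq1 : ∀ᵐ t ∂(volume : Measure ℝ), t ∈ Set.uIoc a b → f t = A + B * t := by
    filter_upwards [hbne] with t ht hmem
    rw [Set.uIoc_of_le hab] at hmem
    exact h1 t ⟨hmem.1, lt_of_le_of_ne hmem.2 ht⟩
  have i0 : IntervalIntegrable f volume 0 a := by
    rw [intervalIntegrable_iff, Set.uIoc_of_le ha]
    apply (integrable_zero _ _ _).congr
    filter_upwards [ae_restrict_mem measurableSet_Ioc] with t ht
    exact (h0 t ⟨le_of_lt ht.1, ht.2⟩).symm
  have i1 : IntervalIntegrable f volume a b := by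
    rw [intervalIntegrable_iff, Set.uIoc_of_le hab]
    apply ((continuous_const.add (continuous_const.mul continuous_id)).integrableOn_Ioc).congr
    filter_upwards [ae_restrict_mem measurableSet_Ioc, ae_restrict_of_ae hbne] with t ht htb
    exact (h1 t ⟨ht.1, lt_of_le_of_ne ht.2 htb⟩).symm
  rw [← intervalIntegral.integral_add_adjacent_intervals i0 i1]
  have e0 : ∫ t in (0:ℝ)..a, f t = 0 := by
    rw [intervalIntegral.integral_congr (g := fun _ => (0:ℝ))]
    · simp
    · intro t ht
      rw [Set.uIcc_of_le ha] at ht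
      exact h0 t ht
  have e1 : ∫ t in a..b, f t = ∫ t in a..b, (A + B * t) :=
    intervalIntegral.integral_congr_ae heq1
  rw [e0, e1, intervalIntegral.integral_add intervalIntegrable_const
    ((continuous_id'.intervalIntegrable a b).const_mul B)]
  rw [intervalIntegral.integral_const, intervalIntegral.integral_const_mul, integral_id, smul_eq_mul]
  ring

/-- SUPG triangularity with `τ_SUPG = h/2` for degree-1 splines also holds in
the last row and column, where the basis contains the truncated boundary
B-spline `b_n` on `[0, T]` with `T = n*h`. -/
theorem supg_boundary_row_column (h : ℝ) (hh : 0 < h) (n : ℕ) (hn : 2 ≤ n) :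
    ((∫ t in (0:ℝ)..((n : ℝ) * h), hatRDeriv h n t * hat h ((n : ℤ) - 1) t) +
        (h / 2) * (∫ t in (0:ℝ)..((n : ℝ) * h),
          hatRDeriv h n t * hatDeriv h ((n : ℤ) - 1) t) = 0) ∧
    ((∫ t in (0:ℝ)..((n : ℝ) * h), hatRDeriv h n t * hatR h n t) +
        (h / 2) * (∫ t in (0:ℝ)..((n : ℝ) * h), (hatRDeriv h n t) ^ 2) = 1) ∧
    ((∫ t in (0:ℝ)..((n : ℝ) * h), hatDeriv h ((n : ℤ) - 1) t * hatR h n t) +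
        (h / 2) * (∫ t in (0:ℝ)..((n : ℝ) * h),
          hatDeriv h ((n : ℤ) - 1) t * hatRDeriv h n t) = -1) := by
  have hn' : (2:ℝ) ≤ (n:ℝ) := by exact_mod_cast hn
  have hne : h ≠ 0 := ne_of_gt hh
  set a : ℝ := ((n:ℝ) - 1) * h with ha_def
  set b : ℝ := (n:ℝ) * h with hb_def
  have ha : 0 ≤ a := by
    rw [ha_def]; nlinarith
  have hab : a ≤ b := by
    rw [ha_def, hb_def]; nlinarith
  have hcast : (((n:ℤ) - 1 : ℤ) : ℝ) = (n:ℝ) - 1 := by push_cast; ring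
  -- pointwise values on Ioo a b
  have hRD : ∀ t ∈ Set.Ioo a b, hatRDeriv h n t = 1 / h := by
    intro t ht
    simp only [hatRDeriv, if_pos (show ((n:ℝ) - 1) * h < t ∧ t < (n:ℝ) * h from ⟨ht.1, ht.2⟩)]
  have hHat : ∀ t ∈ Set.Ioo a b, hat h ((n:ℤ) - 1) t = 1 - (t / h - ((n:ℝ) - 1)) := by
    intro t ht
    have hd1 : (n:ℝ) - 1 ≤ t / h := (le_div_iff₀ hh).2 (by linarith [ht.1])
    have hd2 : t / h ≤ (n:ℝ) := (div_le_iff₀ hh).2 (by linarith [ht.2])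
    rw [hat, hcast, abs_of_nonneg (by linarith), max_eq_right (by linarith)]
  have hHD : ∀ t ∈ Set.Ioo a b, hatDeriv h ((n:ℤ) - 1) t = -(1 / h) := by
    intro t ht
    rw [hatDeriv, hcast, if_neg, if_pos]
    · exact ⟨ht.1, by linarith [ht.2]⟩
    · rintro ⟨-, h2⟩; linarith [ht.1]
  have hR : ∀ t ∈ Set.Ioo a b, hatR h n t = (t - ((n:ℝ) - 1) * h) / h := by
    intro t ht
    rw [hatR, if_pos ⟨le_of_lt ht.1, le_of_lt ht.2⟩]
  -- vanishing on [0, a]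
  have hRD0 : ∀ t ∈ Set.Icc (0:ℝ) a, hatRDeriv h n t = 0 := by
    intro t ht
    rw [hatRDeriv, if_neg]
    rintro ⟨h1, -⟩; exact absurd h1 (not_lt.2 ht.2)
  have hR0 : ∀ t ∈ Set.Icc (0:ℝ) a, hatR h n t = 0 := by
    intro t ht
    rw [hatR]
    split_ifs with hc
    · have : t = ((n:ℝ) - 1) * h := le_antisymm ht.2 hc.1
      rw [this]; simp
    · rfl
  have e1 : ∫ t in (0:ℝ)..b, hatRDeriv h n t * hat h ((n:ℤ) - 1) t
      = ((n:ℝ) / h) * (b - a) + (-(1 / h ^ 2)) * (b ^ 2 - a ^ 2) / 2 := by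
    apply integral_of_piecewise _ _ _ _ _ ha hab
    · intro t ht; rw [hRD0 t ht]; ring
    · intro t ht; rw [hRD t ht, hHat t ht]; field_simp; ring
  have e2 : ∫ t in (0:ℝ)..b, hatRDeriv h n t * hatDeriv h ((n:ℤ) - 1) t
      = (-(1 / h ^ 2)) * (b - a) + 0 * (b ^ 2 - a ^ 2) / 2 := by
    apply integral_of_piecewise _ _ _ _ _ ha hab
    · intro t ht; rw [hRD0 t ht]; ring
    · intro t ht; rw [hRD t ht, hHD t ht]; field_simp; ring
  have e3 : ∫ t in (0:ℝ)..b, hatRDeriv h n t * hatR h n t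
      = (-(((n:ℝ) - 1) / h)) * (b - a) + (1 / h ^ 2) * (b ^ 2 - a ^ 2) / 2 := by
    apply integral_of_piecewise _ _ _ _ _ ha hab
    · intro t ht; rw [hRD0 t ht]; ring
    · intro t ht; rw [hRD t ht, hR t ht]; field_simp; ring
  have e4 : ∫ t in (0:ℝ)..b, (hatRDeriv h n t) ^ 2
      = (1 / h ^ 2) * (b - a) + 0 * (b ^ 2 - a ^ 2) / 2 := by
    apply integral_of_piecewise _ _ _ _ _ ha hab
    · intro t ht; rw [hRD0 t ht]; ring
    · intro t ht; rw [hRD t ht]; field_simp; ring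
  have e5 : ∫ t in (0:ℝ)..b, hatDeriv h ((n:ℤ) - 1) t * hatR h n t
      = ((((n:ℝ) - 1)) / h) * (b - a) + (-(1 / h ^ 2)) * (b ^ 2 - a ^ 2) / 2 := by
    apply integral_of_piecewise _ _ _ _ _ ha hab
    · intro t ht; rw [hR0 t ht]; ring
    · intro t ht; rw [hHD t ht, hR t ht]; field_simp; ring
  have e6 : ∫ t in (0:ℝ)..b, hatDeriv h ((n:ℤ) - 1) t * hatRDeriv h n t
      = (-(1 / h ^ 2)) * (b - a) + 0 * (b ^ 2 - a ^ 2) / 2 := by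
    apply integral_of_piecewise _ _ _ _ _ ha hab
    · intro t ht; rw [hRD0 t ht]; ring
    · intro t ht; rw [hRD t ht, hHD t ht]; field_simp; ring
  refine ⟨?_, ?_, ?_⟩
  · rw [e1, e2, ha_def, hb_def]; field_simp; ring
  · rw [e3, e4, ha_def, hb_def]; field_simp; ring
  · rw [e5, e6, ha_def, hb_def]; field_simp; ring
end
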